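/- Let n, δ ∈ ℕ and let G be an n-vertex finite simple graph with minimum degree at least δ. If 3n ≥ (δ+1)(δ+2), then for every integer t ≥ 3, i_t(G) ≤ C(n−δ, t) + C(δ, t). -/

import Mathlib

set_option linter.unusedSectionVars false

open Finset

/-- `numIndep G t` is the number of independent sets of size `t` in `G`, i.e. the number of
`t`-element subsets of the vertex set containing no edge. -/
def numIndep {V : Type*} (G : SimpleGraph V) [Fintype V] [DecidableEq V] [DecidableRel G.Adj]
    (t : ℕ) : ℕ :=
  (((univ : Finset V).powersetCard t).filter fun s => ∀ u ∈ s, ∀ v ∈ s, ¬ G.Adj u v).card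

namespace Stmt8Aux

variable {V : Type*} [Fintype V] [DecidableEq V] (G : SimpleGraph V) [DecidableRel G.Adj]

/-- the set of independent `t`-sets -/
def It (t : ℕ) : Finset (Finset V) :=
  ((univ : Finset V).powersetCard t).filter fun s => ∀ u ∈ s, ∀ v ∈ s, ¬ G.Adj u v

lemma numIndep_eq (t : ℕ) : numIndep G t = (It G t).card := rfl

/-- the non-closed-neighborhood of `v` -/
def nA (v : V) : Finset V := univ \ insert v (G.neighborFinset v)

lemma mem_nA {v w : V} : w ∈ nA G v ↔ w ≠ v ∧ ¬ G.Adj v w := by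
  simp [nA]

lemma nA_comm {v w : V} : w ∈ nA G v ↔ v ∈ nA G w := by
  rw [mem_nA, mem_nA, G.adj_comm, ne_comm]

lemma card_nA (v : V) : (nA G v).card + (G.degree v + 1) = Fintype.card V := by
  have h0 : v ∉ G.neighborFinset v := by simp
  have h1 : (insert v (G.neighborFinset v)).card = G.degree v + 1 := by
    rw [card_insert_of_notMem h0, G.card_neighborFinset_eq_degree]
  rw [nA, card_sdiff_of_subset (subset_univ _), h1, ← card_univ]
  exact Nat.sub_add_cancel (by rw [← h1]; exact card_le_univ _)

/-- ordered non-adjacent (distinct) pairs -/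
def NA : Finset (V × V) := (univ ×ˢ univ).filter fun p => p.2 ∈ nA G p.1

/-- ordered independent triples -/
def Trip : Finset ((V × V) × V) :=
  ((univ ×ˢ univ) ×ˢ univ).filter fun q =>
    q.1.2 ∈ nA G q.1.1 ∧ q.2 ∈ nA G q.1.1 ∩ nA G q.1.2

lemma mem_NA {p : V × V} : p ∈ NA G ↔ p.2 ∈ nA G p.1 := by simp [NA]

lemma mem_Trip {q : (V × V) × V} :
    q ∈ Trip G ↔ q.1 ∈ NA G ∧ q.2 ∈ nA G q.1.1 ∩ nA G q.1.2 := by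
  simp [Trip, NA]

lemma trip_card_eq : (Trip G).card = ∑ p ∈ NA G, (nA G p.1 ∩ nA G p.2).card := by
  rw [card_eq_sum_ones,
    Finset.sum_finset_product (Trip G) (NA G) (fun p => nA G p.1 ∩ nA G p.2)
      (fun q => mem_Trip G)]
  refine Finset.sum_congr rfl fun p _ => ?_
  rw [card_eq_sum_ones]

lemma pair_bound {v w : V} (h : w ∈ nA G v) :
    (nA G v ∩ nA G w).card + (G.degree v + G.degree w + 2)
      ≤ Fintype.card V + (G.neighborFinset v ∩ G.neighborFinset w).card := by
  obtain ⟨hne, hnadj⟩ := (mem_nA G).1 h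
  have hinter : nA G v ∩ nA G w
      = univ \ (insert v (G.neighborFinset v) ∪ insert w (G.neighborFinset w)) := by
    ext x
    simp only [nA, mem_inter, mem_sdiff, mem_union, mem_univ, true_and]
    tauto
  have hsub : insert v (G.neighborFinset v) ∩ insert w (G.neighborFinset w)
      ⊆ G.neighborFinset v ∩ G.neighborFinset w := by
    intro x hx
    simp only [mem_inter, mem_insert, SimpleGraph.mem_neighborFinset] at hx ⊢
    obtain ⟨h1, h2⟩ := hx
    constructor
    · rcases h1 with rfl | h1
      · rcases h2 with rfl | h2
        · exact absurd rfl hne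
        · exact absurd h2.symm hnadj
      · exact h1
    · rcases h2 with rfl | h2
      · rcases h1 with h1 | h1
        · exact absurd h1 hne
        · exact absurd h1 hnadj
      · exact h2
  have hcv : v ∉ G.neighborFinset v := by simp
  have hcw : w ∉ G.neighborFinset w := by simp
  have h1 : (insert v (G.neighborFinset v)).card = G.degree v + 1 := by
    rw [card_insert_of_notMem hcv, G.card_neighborFinset_eq_degree]
  have h2 : (insert w (G.neighborFinset w)).card = G.degree w + 1 := by
    rw [card_insert_of_notMem hcw, G.card_neighborFinset_eq_degree]
  have hcu := card_union_add_card_inter (insert v (G.neighborFinset v))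
      (insert w (G.neighborFinset w))
  rw [h1, h2] at hcu
  have hle : (insert v (G.neighborFinset v) ∪ insert w (G.neighborFinset w)).card
      ≤ Fintype.card V := by rw [← card_univ]; exact card_le_univ _
  have hsd : (nA G v ∩ nA G w).card
      + (insert v (G.neighborFinset v) ∪ insert w (G.neighborFinset w)).card
      = Fintype.card V := by
    rw [hinter, card_sdiff_of_subset (subset_univ _), ← card_univ]
    exact Nat.sub_add_cancel (by rw [card_univ]; exact hle)
  have hci : (insert v (G.neighborFinset v) ∩ insert w (G.neighborFinset w)).card
      ≤ (G.neighborFinset v ∩ G.neighborFinset w).card := card_le_card hsub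
  omega

/-- pairs-with-common-neighbor structure -/
def Wc : Finset ((V × V) × V) :=
  ((univ ×ˢ univ) ×ˢ univ).filter fun q =>
    q.1 ∈ NA G ∧ q.2 ∈ G.neighborFinset q.1.1 ∩ G.neighborFinset q.1.2

lemma Wc_card_eq :
    (Wc G).card = ∑ p ∈ NA G, (G.neighborFinset p.1 ∩ G.neighborFinset p.2).card := by
  rw [card_eq_sum_ones,
    Finset.sum_finset_product (Wc G) (NA G)
      (fun p => G.neighborFinset p.1 ∩ G.neighborFinset p.2) (fun q => by simp [Wc])]
  refine Finset.sum_congr rfl fun p _ => ?_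
  rw [card_eq_sum_ones]

/-- cherries: (x, (u,v)) with u,v distinct neighbors of x -/
def Wd : Finset (V × (V × V)) :=
  (univ ×ˢ (univ ×ˢ univ)).filter fun r => r.2 ∈ (G.neighborFinset r.1).offDiag

lemma Wd_card_eq :
    (Wd G).card = ∑ x : V, (G.degree x * G.degree x - G.degree x) := by
  rw [card_eq_sum_ones,
    Finset.sum_finset_product (Wd G) (univ : Finset V)
      (fun x => (G.neighborFinset x).offDiag) (fun r => by simp [Wd])]
  refine Finset.sum_congr rfl fun x _ => ?_
  rw [← card_eq_sum_ones, offDiag_card, G.card_neighborFinset_eq_degree]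

lemma codeg_sum_le :
    ∑ p ∈ NA G, (G.neighborFinset p.1 ∩ G.neighborFinset p.2).card
      ≤ ∑ x : V, (G.degree x * G.degree x - G.degree x) := by
  rw [← Wc_card_eq, ← Wd_card_eq]
  apply card_le_card_of_injOn (fun q => (q.2, q.1))
  · intro q hq
    simp only [mem_coe, Wc, mem_filter, mem_product, mem_univ, true_and, mem_inter,
      SimpleGraph.mem_neighborFinset] at hq
    obtain ⟨hna, h1, h2⟩ := hq
    simp only [mem_coe, Wd, mem_filter, mem_product, mem_univ, true_and, mem_offDiag,
      SimpleGraph.mem_neighborFinset]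
    refine ⟨h1.symm, h2.symm, ?_⟩
    exact (((mem_nA G).1 ((mem_NA G).1 hna)).1).symm
  · intro a _ b _ hab
    simp only [Prod.mk.injEq] at hab
    exact Prod.ext hab.2 hab.1

lemma sum_NA {M : Type*} [AddCommMonoid M] (F : V → V → M) :
    ∑ p ∈ NA G, F p.1 p.2 = ∑ v : V, ∑ w ∈ nA G v, F v w := by
  rw [Finset.sum_finset_product (NA G) univ (fun v => nA G v) (fun p => by simp [NA])]

lemma sum_NA_swap (f : V → ℤ) :
    ∑ p ∈ NA G, f p.2 = ∑ p ∈ NA G, f p.1 := by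
  refine Finset.sum_nbij' Prod.swap Prod.swap ?_ ?_ ?_ ?_ ?_ <;>
    simp only [mem_NA, Prod.fst_swap, Prod.snd_swap, Prod.swap_swap, implies_true]
  · intro p hp; exact (nA_comm G).1 hp
  · intro p hp; exact (nA_comm G).1 hp

lemma trip_card_le (n δ : ℕ) (hn : Fintype.card V = n) (hδ : ∀ v, δ ≤ G.degree v)
    (hmax : ∀ v, G.degree v + δ + 1 ≤ n) (hδ1 : 1 ≤ δ)
    (hcond : (δ + 1) * (δ + 2) ≤ 3 * n) :
    (Trip G).card ≤ (n - δ) * (n - δ - 1) * (n - δ - 2) := by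
  rcases isEmpty_or_nonempty V with hV | hV
  · have he : Trip G = ∅ := eq_empty_of_forall_notMem (by rintro ⟨⟨a, b⟩, c⟩ _; exact hV.false a)
    simp [he]
  · obtain ⟨v₀⟩ := hV
    have hn2 : 2 * δ + 1 ≤ n := by have h1 := hδ v₀; have h2 := hmax v₀; omega
    have hA : ∀ v : V, ((nA G v).card : ℤ) = (n : ℤ) - 1 - (G.degree v : ℤ) := by
      intro v
      have h := card_nA G v
      rw [hn] at h
      have h2 := congrArg (Nat.cast : ℕ → ℤ) h
      push_cast at h2
      linarith
    set CAP : ℤ := 3 * (δ : ℤ) ^ 2 - 3 * ((n : ℤ) - 1) * δ + ((n : ℤ) - 1) * ((n : ℤ) - 2) with hCAP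
    have key : ((Trip G).card : ℤ) ≤ (n : ℤ) * CAP := by
      calc ((Trip G).card : ℤ)
          ≤ ∑ p ∈ NA G, ((n : ℤ) + ((G.neighborFinset p.1 ∩ G.neighborFinset p.2).card : ℤ)
              - (G.degree p.1 : ℤ) - (G.degree p.2 : ℤ) - 2) := by
            rw [trip_card_eq, Nat.cast_sum]
            apply Finset.sum_le_sum
            intro p hp
            have hb := pair_bound G ((mem_NA G).1 hp)
            rw [hn] at hb
            have hb2 : ((nA G p.1 ∩ nA G p.2).card : ℤ)
                + ((G.degree p.1 : ℤ) + (G.degree p.2 : ℤ) + 2)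
                ≤ (n : ℤ) + ((G.neighborFinset p.1 ∩ G.neighborFinset p.2).card : ℤ) := by
              exact_mod_cast hb
            linarith
        _ = (∑ p ∈ NA G, ((n : ℤ) - 2 - (G.degree p.1 : ℤ))
              - ∑ p ∈ NA G, (G.degree p.2 : ℤ))
              + ∑ p ∈ NA G, ((G.neighborFinset p.1 ∩ G.neighborFinset p.2).card : ℤ) := by
            rw [← Finset.sum_sub_distrib, ← Finset.sum_add_distrib]
            apply Finset.sum_congr rfl
            intros; ring
        _ = ∑ p ∈ NA G, ((n : ℤ) - 2 - 2 * (G.degree p.1 : ℤ))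
              + ∑ p ∈ NA G, ((G.neighborFinset p.1 ∩ G.neighborFinset p.2).card : ℤ) := by
            rw [sum_NA_swap G (fun v => (G.degree v : ℤ)), ← Finset.sum_sub_distrib]
            congr 1
            apply Finset.sum_congr rfl
            intros; ring
        _ ≤ ∑ p ∈ NA G, ((n : ℤ) - 2 - 2 * (G.degree p.1 : ℤ))
              + ∑ x : V, ((G.degree x : ℤ) * (G.degree x : ℤ) - (G.degree x : ℤ)) := by
            apply add_le_add_right
            have hc := codeg_sum_le G
            have hterm : ∀ x : V, ((G.degree x * G.degree x - G.degree x : ℕ) : ℤ)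
                = (G.degree x : ℤ) * (G.degree x : ℤ) - (G.degree x : ℤ) := by
              intro x
              have hxx : G.degree x ≤ G.degree x * G.degree x := by
                rcases Nat.eq_zero_or_pos (G.degree x) with h | h
                · simp [h]
                · exact Nat.le_mul_of_pos_left _ h
              push_cast [Nat.cast_sub hxx]
              ring
            calc ∑ p ∈ NA G, ((G.neighborFinset p.1 ∩ G.neighborFinset p.2).card : ℤ)
                = ((∑ p ∈ NA G, (G.neighborFinset p.1 ∩ G.neighborFinset p.2).card : ℕ) : ℤ) :=
                  (Nat.cast_sum _ _).symm
              _ ≤ ((∑ x : V, (G.degree x * G.degree x - G.degree x) : ℕ) : ℤ) := by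
                  exact_mod_cast hc
              _ = ∑ x : V, ((G.degree x : ℤ) * (G.degree x : ℤ) - (G.degree x : ℤ)) := by
                  rw [Nat.cast_sum]
                  exact Finset.sum_congr rfl fun x _ => hterm x
        _ = ∑ v : V, (((nA G v).card : ℤ) * ((n : ℤ) - 2 - 2 * (G.degree v : ℤ))
              + ((G.degree v : ℤ) * (G.degree v : ℤ) - (G.degree v : ℤ))) := by
            rw [Finset.sum_add_distrib]
            congr 1
            rw [sum_NA G (fun v w => (n : ℤ) - 2 - 2 * (G.degree v : ℤ))]
            apply Finset.sum_congr rfl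
            intro v _
            rw [Finset.sum_const, nsmul_eq_mul]
        _ ≤ ∑ _v : V, CAP := by
            apply Finset.sum_le_sum
            intro v _
            rw [hA v, hCAP]
            have h1 : (0 : ℤ) ≤ (G.degree v : ℤ) - (δ : ℤ) := by
              have hh := hδ v
              have hh2 : (δ : ℤ) ≤ (G.degree v : ℤ) := by exact_mod_cast hh
              linarith
            have h2 : (0 : ℤ) ≤ (n : ℤ) - 1 - (δ : ℤ) - (G.degree v : ℤ) := by
              have := hmax v
              have hc : (G.degree v : ℤ) + (δ : ℤ) + 1 ≤ (n : ℤ) := by exact_mod_cast this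
              linarith
            nlinarith [mul_nonneg h1 h2]
        _ = (n : ℤ) * CAP := by
            rw [Finset.sum_const, card_univ, hn, nsmul_eq_mul]
    have hfin : (n : ℤ) * CAP ≤ (((n - δ) * (n - δ - 1) * (n - δ - 2) : ℕ) : ℤ) := by
      have e1 : ((n - δ : ℕ) : ℤ) = (n : ℤ) - (δ : ℤ) := by
        rw [Nat.cast_sub (by omega)]
      have e2 : ((n - δ - 1 : ℕ) : ℤ) = (n : ℤ) - (δ : ℤ) - 1 := by
        rw [Nat.cast_sub (by omega), Nat.cast_sub (by omega)]; push_cast; ring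
      have e3 : ((n - δ - 2 : ℕ) : ℤ) = (n : ℤ) - (δ : ℤ) - 2 := by
        rw [Nat.cast_sub (by omega), Nat.cast_sub (by omega)]; push_cast; ring
      rw [Nat.cast_mul, Nat.cast_mul, e1, e2, e3, hCAP]
      have hco : ((δ : ℤ) + 1) * ((δ : ℤ) + 2) ≤ 3 * (n : ℤ) := by exact_mod_cast hcond
      have hd0 : (0 : ℤ) ≤ (δ : ℤ) := Int.natCast_nonneg δ
      nlinarith [mul_nonneg hd0 (by linarith : (0 : ℤ) ≤ 3 * (n : ℤ) - ((δ : ℤ) + 1) * ((δ : ℤ) + 2))]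
    have := key.trans hfin
    exact_mod_cast this

lemma tripCount {t : ℕ} (I : Finset V) (hI : I.card = t) :
    (((I ×ˢ I) ×ˢ I).filter fun q : (V × V) × V =>
      q.1.1 ≠ q.1.2 ∧ q.2 ≠ q.1.1 ∧ q.2 ≠ q.1.2).card = t * (t - 1) * (t - 2) := by
  have hmem : ∀ q : (V × V) × V,
      q ∈ ((I ×ˢ I) ×ˢ I).filter (fun q : (V × V) × V =>
        q.1.1 ≠ q.1.2 ∧ q.2 ≠ q.1.1 ∧ q.2 ≠ q.1.2)
      ↔ q.1 ∈ I.offDiag ∧ q.2 ∈ I \ {q.1.1, q.1.2} := by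
    intro q
    simp only [mem_filter, mem_product, mem_offDiag, mem_sdiff, mem_insert, mem_singleton]
    tauto
  rw [card_eq_sum_ones,
    Finset.sum_finset_product _ I.offDiag (fun p => I \ {p.1, p.2}) hmem]
  have hfib : ∀ p ∈ I.offDiag, ∑ _a ∈ I \ {p.1, p.2}, (1 : ℕ) = t - 2 := by
    intro p hp
    rw [mem_offDiag] at hp
    rw [Finset.sum_const, smul_eq_mul, mul_one, card_sdiff_of_subset]
    · rw [hI, card_insert_of_notMem (by simp [hp.2.2]), card_singleton]
    · intro x hx
      simp only [mem_insert, mem_singleton] at hx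
      rcases hx with rfl | rfl
      · exact hp.1
      · exact hp.2.1
  rw [Finset.sum_congr rfl hfib, Finset.sum_const, smul_eq_mul, offDiag_card, hI]
  rcases t with _ | t'
  · rfl
  · rw [Nat.succ_sub_one, Nat.mul_succ, Nat.add_sub_cancel]

/-- pairs (independent t-set, ordered independent triple inside it) -/
def DD (t : ℕ) : Finset (Finset V × ((V × V) × V)) :=
  ((It G t) ×ˢ ((univ ×ˢ univ) ×ˢ univ)).filter fun r =>
    r.2.1.1 ∈ r.1 ∧ r.2.1.2 ∈ r.1 ∧ r.2.2 ∈ r.1 ∧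
      r.2.1.1 ≠ r.2.1.2 ∧ r.2.2 ≠ r.2.1.1 ∧ r.2.2 ≠ r.2.1.2

lemma indep_of_mem_It {t : ℕ} {I : Finset V} (hI : I ∈ It G t) :
    ∀ u ∈ I, ∀ v ∈ I, ¬ G.Adj u v := (mem_filter.1 hI).2

lemma DD_card_left {t : ℕ} : (DD G t).card = numIndep G t * (t * (t - 1) * (t - 2)) := by
  have hmem : ∀ r : Finset V × ((V × V) × V),
      r ∈ DD G t ↔ r.1 ∈ It G t ∧ r.2 ∈ ((r.1 ×ˢ r.1) ×ˢ r.1).filter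
        (fun q : (V × V) × V => q.1.1 ≠ q.1.2 ∧ q.2 ≠ q.1.1 ∧ q.2 ≠ q.1.2) := by
    intro r
    simp only [DD, mem_filter, mem_product, mem_univ, and_true, true_and]
    tauto
  rw [card_eq_sum_ones,
    Finset.sum_finset_product _ (It G t)
      (fun I => ((I ×ˢ I) ×ˢ I).filter
        (fun q : (V × V) × V => q.1.1 ≠ q.1.2 ∧ q.2 ≠ q.1.1 ∧ q.2 ≠ q.1.2)) hmem]
  rw [numIndep_eq, card_eq_sum_ones (It G t), Finset.sum_mul, one_mul]
  apply Finset.sum_congr rfl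
  intro I hI
  rw [← card_eq_sum_ones]
  exact tripCount I (mem_powersetCard.1 (mem_filter.1 hI).1).2

lemma DD_card_right {n δ t : ℕ} (hn : Fintype.card V = n) (hδ : ∀ v, δ ≤ G.degree v)
    (ht : 3 ≤ t) :
    (DD G t).card ≤ (Trip G).card * (n - δ - 3).choose (t - 3) := by
  have hmem : ∀ r : Finset V × ((V × V) × V),
      r ∈ DD G t ↔ r.2 ∈ Trip G ∧
        r.1 ∈ (It G t).filter (fun I => r.2.1.1 ∈ I ∧ r.2.1.2 ∈ I ∧ r.2.2 ∈ I) := by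
    intro r
    constructor
    · intro hr
      simp only [DD, mem_filter, mem_product, mem_univ, and_true, true_and] at hr
      obtain ⟨hIt, h1, h2, h3, h4, h5, h6⟩ := hr
      have hind := indep_of_mem_It G hIt
      refine ⟨?_, mem_filter.2 ⟨hIt, h1, h2, h3⟩⟩
      rw [mem_Trip]
      refine ⟨(mem_NA G).2 ((mem_nA G).2 ⟨h4.symm, hind _ h1 _ h2⟩), mem_inter.2 ⟨?_, ?_⟩⟩
      · exact (mem_nA G).2 ⟨h5, hind _ h1 _ h3⟩
      · exact (mem_nA G).2 ⟨h6, hind _ h2 _ h3⟩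
    · intro ⟨htr, hfil⟩
      rw [mem_Trip] at htr
      obtain ⟨hna, hint⟩ := htr
      have h1 := (mem_nA G).1 ((mem_NA G).1 hna)
      have h2 := (mem_nA G).1 (mem_inter.1 hint).1
      have h3 := (mem_nA G).1 (mem_inter.1 hint).2
      rw [mem_filter] at hfil
      simp only [DD, mem_filter, mem_product, mem_univ, and_true, true_and]
      exact ⟨hfil.1, hfil.2.1, hfil.2.2.1, hfil.2.2.2, h1.1.symm, h2.1, h3.1⟩
  rw [card_eq_sum_ones,
    Finset.sum_finset_product_right _ (Trip G)
      (fun q => (It G t).filter (fun I => q.1.1 ∈ I ∧ q.1.2 ∈ I ∧ q.2 ∈ I)) hmem]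
  rw [card_eq_sum_ones (Trip G), Finset.sum_mul, one_mul]
  apply Finset.sum_le_sum
  intro q hq
  rw [← card_eq_sum_ones]
  -- bound the fiber
  rw [mem_Trip] at hq
  obtain ⟨hna, hint⟩ := hq
  obtain ⟨hvu, hnadjuv⟩ := (mem_nA G).1 ((mem_NA G).1 hna)
  obtain ⟨hwu, hnadjuw⟩ := (mem_nA G).1 (mem_inter.1 hint).1
  obtain ⟨hwv, hnadjvw⟩ := (mem_nA G).1 (mem_inter.1 hint).2
  set u := q.1.1 with hu
  set v := q.1.2 with hv
  set w := q.2 with hw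
  set S : Finset V := insert u (insert v (insert w (G.neighborFinset u))) with hS
  have husnb : u ∉ G.neighborFinset u := by simp
  have hvsnb : v ∉ G.neighborFinset u := by
    rw [SimpleGraph.mem_neighborFinset]; exact hnadjuv
  have hwsnb : w ∉ G.neighborFinset u := by
    rw [SimpleGraph.mem_neighborFinset]; exact hnadjuw
  have hcardS : S.card = G.degree u + 3 := by
    rw [hS, card_insert_of_notMem, card_insert_of_notMem, card_insert_of_notMem hwsnb,
      G.card_neighborFinset_eq_degree]
    · simp only [mem_insert]
      push_neg
      exact ⟨hwv.symm, hvsnb⟩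
    · simp only [mem_insert]
      push_neg
      exact ⟨hvu.symm, hwu.symm, husnb⟩
  have hinj : ((It G t).filter (fun I => u ∈ I ∧ v ∈ I ∧ w ∈ I)).card
      ≤ ((univ \ S).powersetCard (t - 3)).card := by
    apply card_le_card_of_injOn (fun I => I \ {u, v, w})
    · intro I hI
      rw [mem_coe, mem_filter] at hI
      obtain ⟨hIt, hu', hv', hw'⟩ := hI
      have hind := indep_of_mem_It G hIt
      have hcardI := (mem_powersetCard.1 (mem_filter.1 hIt).1).2
      rw [mem_coe, mem_powersetCard]
      constructor
      · intro x hx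
        simp only [mem_sdiff, mem_insert, mem_singleton] at hx
        obtain ⟨hxI, hxne⟩ := hx
        push_neg at hxne
        simp only [mem_sdiff, mem_univ, true_and, hS, mem_insert,
          SimpleGraph.mem_neighborFinset]
        push_neg
        exact ⟨hxne.1, hxne.2.1, hxne.2.2, fun h => (hind _ hu' _ hxI) h⟩
      · have hsub : ({u, v, w} : Finset V) ⊆ I := by
          intro x hx
          simp only [mem_insert, mem_singleton] at hx
          rcases hx with rfl | rfl | rfl <;> assumption
        rw [card_sdiff_of_subset hsub, hcardI]
        congr 1
        rw [card_insert_of_notMem, card_insert_of_notMem, card_singleton]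
        · simp [hwv.symm]
        · simp only [mem_insert, mem_singleton]
          push_neg
          exact ⟨hvu.symm, hwu.symm⟩
    · intro I hI J hJ hIJ
      dsimp only at hIJ
      simp only [coe_filter, Set.mem_setOf_eq] at hI hJ
      have hsubI : ({u, v, w} : Finset V) ⊆ I := by
        intro x hx
        simp only [mem_insert, mem_singleton] at hx
        rcases hx with rfl | rfl | rfl
        exacts [hI.2.1, hI.2.2.1, hI.2.2.2]
      have hsubJ : ({u, v, w} : Finset V) ⊆ J := by
        intro x hx
        simp only [mem_insert, mem_singleton] at hx
        rcases hx with rfl | rfl | rfl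
        exacts [hJ.2.1, hJ.2.2.1, hJ.2.2.2]
      have : I \ {u, v, w} ∪ {u, v, w} = J \ {u, v, w} ∪ {u, v, w} := by rw [hIJ]
      rwa [sdiff_union_of_subset hsubI, sdiff_union_of_subset hsubJ] at this
  refine hinj.trans ?_
  rw [card_powersetCard]
  apply Nat.choose_le_choose
  rw [card_sdiff_of_subset (subset_univ _), card_univ, hn, hcardS]
  have := hδ u
  omega

lemma choose_cube {m t : ℕ} (ht : 3 ≤ t) :
    m * (m - 1) * (m - 2) * (m - 3).choose (t - 3)
      = t * (t - 1) * (t - 2) * m.choose t := by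
  obtain ⟨c, rfl⟩ : ∃ c, t = c + 3 := ⟨t - 3, by omega⟩
  by_cases hm : m < 3
  · have h3 : m - 2 = 0 := by omega
    rw [h3, Nat.mul_zero, Nat.zero_mul, Nat.choose_eq_zero_of_lt (by omega), Nat.mul_zero]
  · obtain ⟨a, rfl⟩ : ∃ a, m = a + 3 := ⟨m - 3, by omega⟩
    simp only [Nat.add_sub_cancel, show a + 3 - 1 = a + 2 by omega, show a + 3 - 2 = a + 1 by omega,
      show c + 3 - 1 = c + 2 by omega, show c + 3 - 2 = c + 1 by omega]
    have e1 := Nat.add_one_mul_choose_eq a c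
    have e2 := Nat.add_one_mul_choose_eq (a + 1) (c + 1)
    have e3 := Nat.add_one_mul_choose_eq (a + 2) (c + 2)
    have key : ((a : ℤ) + 3) * ((a : ℤ) + 2) * ((a : ℤ) + 1) * (a.choose c : ℤ)
        = ((c : ℤ) + 3) * ((c : ℤ) + 2) * ((c : ℤ) + 1) * ((a + 3).choose (c + 3) : ℤ) := by
      have f1 : ((a : ℤ) + 1) * (a.choose c : ℤ)
          = ((a + 1).choose (c + 1) : ℤ) * ((c : ℤ) + 1) := by exact_mod_cast e1
      have f2 : ((a : ℤ) + 2) * ((a + 1).choose (c + 1) : ℤ)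
          = ((a + 2).choose (c + 2) : ℤ) * ((c : ℤ) + 2) := by exact_mod_cast e2
      have f3 : ((a : ℤ) + 3) * ((a + 2).choose (c + 2) : ℤ)
          = ((a + 3).choose (c + 3) : ℤ) * ((c : ℤ) + 3) := by exact_mod_cast e3
      linear_combination ((a : ℤ) + 3) * ((a : ℤ) + 2) * f1
        + ((a : ℤ) + 3) * ((c : ℤ) + 1) * f2 + ((c : ℤ) + 1) * ((c : ℤ) + 2) * f3
    exact_mod_cast key

/-- the core bound: if additionally every degree is at most `n - 1 - δ`, then
`numIndep G t ≤ (n-δ).choose t`. -/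
lemma core_bound {n δ t : ℕ} (hn : Fintype.card V = n) (hδ : ∀ v, δ ≤ G.degree v)
    (hmax : ∀ v, G.degree v + δ + 1 ≤ n) (hδ1 : 1 ≤ δ)
    (hcond : (δ + 1) * (δ + 2) ≤ 3 * n) (ht : 3 ≤ t) :
    numIndep G t ≤ (n - δ).choose t := by
  have h1 : numIndep G t * (t * (t - 1) * (t - 2))
      ≤ (Trip G).card * (n - δ - 3).choose (t - 3) := by
    rw [← DD_card_left]
    exact DD_card_right G hn hδ ht
  have h2 := trip_card_le G n δ hn hδ hmax hδ1 hcond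
  have h3 : (Trip G).card * (n - δ - 3).choose (t - 3)
      ≤ (n - δ) * (n - δ - 1) * (n - δ - 2) * (n - δ - 3).choose (t - 3) :=
    Nat.mul_le_mul_right _ h2
  have h4 := choose_cube (m := n - δ) ht
  have h5 : numIndep G t * (t * (t - 1) * (t - 2))
      ≤ (n - δ).choose t * (t * (t - 1) * (t - 2)) := by
    calc numIndep G t * (t * (t - 1) * (t - 2))
        ≤ (n - δ) * (n - δ - 1) * (n - δ - 2) * (n - δ - 3).choose (t - 3) := h1.trans h3
      _ = t * (t - 1) * (t - 2) * (n - δ).choose t := h4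
      _ = (n - δ).choose t * (t * (t - 1) * (t - 2)) := by ring
  have hpos : 0 < t * (t - 1) * (t - 2) := by
    have : 3 ≤ t := ht
    have h1' : 0 < t := by omega
    have h2' : 0 < t - 1 := by omega
    have h3' : 0 < t - 2 := by omega
    positivity
  exact Nat.le_of_mul_le_mul_right h5 hpos

lemma trivial_bound (t : ℕ) : numIndep G t ≤ (Fintype.card V).choose t := by
  rw [numIndep_eq, ← card_univ, ← card_powersetCard]
  exact card_filter_le _ _

end Stmt8Aux

open Stmt8Aux in
theorem aux_main : ∀ (δ : ℕ) {V : Type u} [Fintype V] [DecidableEq V] (G : SimpleGraph V)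
    [DecidableRel G.Adj] (n t : ℕ), Fintype.card V = n → (∀ v : V, δ ≤ G.degree v) →
    (δ + 1) * (δ + 2) ≤ 3 * n → 3 ≤ t →
    numIndep G t ≤ (n - δ).choose t + δ.choose t := by
  intro δ
  induction δ with
  | zero =>
    intro V _ _ G _ n t hn hδ hcond ht
    have h := trivial_bound G t
    rw [hn] at h
    simpa using h.trans (Nat.le_add_right _ _)
  | succ δ' ih =>
    intro V _ _ G instAdj n t hn hδ hcond ht
    by_cases hex : ∃ u : V, n ≤ G.degree u + (δ' + 1)
    · -- peeling case
      obtain ⟨u, hu⟩ := hex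
      have hn1 : 1 ≤ n := by
        rw [← hn]
        exact Fintype.card_pos_iff.2 ⟨u⟩
      obtain ⟨t₀, rfl⟩ : ∃ t₀, t = t₀ + 1 := ⟨t - 1, by omega⟩
      -- the two classes
      have hsplit : numIndep G (t₀ + 1)
          = ((It G (t₀ + 1)).filter (fun I => u ∈ I)).card
            + ((It G (t₀ + 1)).filter (fun I => u ∉ I)).card := by
        rw [numIndep_eq]
        exact (card_filter_add_card_filter_not _).symm
      -- sets containing u
      have hbound1 : ((It G (t₀ + 1)).filter (fun I => u ∈ I)).card ≤ δ'.choose t₀ := by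
        have hinj : ((It G (t₀ + 1)).filter (fun I => u ∈ I)).card
            ≤ ((nA G u).powersetCard t₀).card := by
          apply card_le_card_of_injOn (fun I => I.erase u)
          · intro I hI
            rw [mem_coe, mem_filter] at hI
            obtain ⟨hIt, huI⟩ := hI
            have hind := indep_of_mem_It G hIt
            have hcardI := (mem_powersetCard.1 (mem_filter.1 hIt).1).2
            rw [mem_coe, mem_powersetCard]
            refine ⟨?_, by rw [card_erase_of_mem huI, hcardI]; omega⟩
            intro x hx
            rw [mem_erase] at hx
            exact (mem_nA G).2 ⟨hx.1, hind _ huI _ hx.2⟩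
          · intro I hI J hJ hIJ
            dsimp only at hIJ
            simp only [coe_filter, Set.mem_setOf_eq] at hI hJ
            have : insert u (I.erase u) = insert u (J.erase u) := by rw [hIJ]
            rwa [insert_erase hI.2, insert_erase hJ.2] at this
        refine hinj.trans ?_
        rw [card_powersetCard]
        apply Nat.choose_le_choose
        have hca := card_nA G u
        rw [hn] at hca
        omega
      -- sets avoiding u : compare with induced graph
      have hbound2 : ((It G (t₀ + 1)).filter (fun I => u ∉ I)).card
          ≤ (n - (δ' + 1)).choose (t₀ + 1) + δ'.choose (t₀ + 1) := by
        classical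
        let V' := {x : V // x ≠ u}
        let G' : SimpleGraph V' := SimpleGraph.comap (Subtype.val) G
        haveI : DecidableRel G'.Adj := fun a b => instAdj a.1 b.1
        have hcard' : Fintype.card V' = n - 1 := by
          have h1 : Fintype.card V' = Fintype.card V - 1 := by
            have := Fintype.card_subtype_compl (fun x : V => x = u)
            rw [Fintype.card_subtype_eq] at this
            exact this
          rw [h1, hn]
        have hδ' : ∀ w : V', δ' ≤ G'.degree w := by
          intro w
          have hsub : (G.neighborFinset w.1).subtype (· ≠ u) ⊆ G'.neighborFinset w := by
            intro a ha
            rw [Finset.mem_subtype] at ha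
            rw [SimpleGraph.mem_neighborFinset] at ha ⊢
            exact ha
          have h1 : ((G.neighborFinset w.1).subtype (· ≠ u)).card
              = ((G.neighborFinset w.1).erase u).card := by
            rw [Finset.card_subtype, Finset.filter_ne']
          have h2 : (G.neighborFinset w.1).card - 1 ≤ ((G.neighborFinset w.1).erase u).card :=
            Finset.pred_card_le_card_erase
          have h3 := hδ w.1
          rw [← SimpleGraph.card_neighborFinset_eq_degree] at h3
          have h4 := card_le_card hsub
          have h5 : G'.degree w = (G'.neighborFinset w).card :=
            (SimpleGraph.card_neighborFinset_eq_degree _ _).symm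
          omega
        have hcond' : (δ' + 1) * (δ' + 2) ≤ 3 * (n - 1) := by
          have h1 : (δ' + 1) * (δ' + 2) + 3 ≤ (δ' + 2) * (δ' + 3) := by nlinarith
          have h2 : (δ' + 2) * (δ' + 3) ≤ 3 * n := hcond
          have h3 : (δ' + 1) * (δ' + 2) + 3 ≤ 3 * n := h1.trans h2
          have h4 : 3 * (n - 1) + 3 = 3 * n := by omega
          omega
        have hIH := ih G' (n - 1) (t₀ + 1) hcard' hδ' hcond' ht
        have hinj : ((It G (t₀ + 1)).filter (fun I => u ∉ I)).card ≤ numIndep G' (t₀ + 1) := by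
          rw [numIndep_eq]
          apply card_le_card_of_injOn (fun I => I.subtype (· ≠ u))
          · intro I hI
            rw [mem_coe, mem_filter] at hI
            obtain ⟨hIt, huI⟩ := hI
            have hind := indep_of_mem_It G hIt
            have hcardI := (mem_powersetCard.1 (mem_filter.1 hIt).1).2
            have hfil : I.filter (fun x => x ≠ u) = I :=
              filter_true_of_mem (fun x hx => by rintro rfl; exact huI hx)
            rw [mem_coe, It, mem_filter, mem_powersetCard]
            refine ⟨⟨subset_univ _, ?_⟩, ?_⟩
            · rw [Finset.card_subtype, hfil, hcardI]
            · intro a ha b hb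
              rw [Finset.mem_subtype] at ha hb
              exact hind _ ha _ hb
          · intro I hI J hJ hIJ
            dsimp only at hIJ
            simp only [coe_filter, Set.mem_setOf_eq] at hI hJ
            have hmapsI : I.filter (fun x => x ≠ u) = I :=
              filter_true_of_mem (fun x hx => by rintro rfl; exact hI.2 hx)
            have hmapsJ : J.filter (fun x => x ≠ u) = J :=
              filter_true_of_mem (fun x hx => by rintro rfl; exact hJ.2 hx)
            have : (I.subtype (· ≠ u)).map (Function.Embedding.subtype _)
                = (J.subtype (· ≠ u)).map (Function.Embedding.subtype _) := by rw [hIJ]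
            rwa [Finset.subtype_map, Finset.subtype_map, hmapsI, hmapsJ] at this
        have heq : n - 1 - δ' = n - (δ' + 1) := by omega
        rw [heq] at hIH
        exact hinj.trans hIH
      rw [hsplit]
      have hpascal : (δ' + 1).choose (t₀ + 1) = δ'.choose t₀ + δ'.choose (t₀ + 1) :=
        Nat.choose_succ_succ' δ' t₀
      omega
    · -- core case
      push_neg at hex
      have hmax : ∀ v : V, G.degree v + (δ' + 1) + 1 ≤ n := by
        intro v
        have := hex v
        omega
      have := core_bound G hn hδ hmax (by omega) hcond ht
      exact this.trans (Nat.le_add_right _ _)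

/-- Let `n, δ ∈ ℕ` and let `G` be an `n`-vertex finite simple graph with minimum degree at
least `δ`.  If `3n ≥ (δ+1)(δ+2)`, then for every integer `t ≥ 3`,
`i_t(G) ≤ C(n−δ, t) + C(δ, t)` (the right-hand side being `i_t(K_{δ,n−δ})`). -/
theorem stmt_8 {V : Type*} [Fintype V] [DecidableEq V] (G : SimpleGraph V) [DecidableRel G.Adj]
    (n δ : ℕ) (hn : Fintype.card V = n) (hδ : ∀ v : V, δ ≤ G.degree v)
    (hcond : (δ + 1) * (δ + 2) ≤ 3 * n) (t : ℕ) (ht : 3 ≤ t) :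
    numIndep G t ≤ (n - δ).choose t + δ.choose t := by
  exact aux_main δ G n t hn hδ hcond ht
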